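/- Let (𝒬, ℛ') and (𝒬', ℛ) be complete hereditary cotorsion pairs in an abelian category with 𝒬' ⊆ 𝒬 and ℛ' ⊆ ℛ and 𝒬 ∩ ℛ' = 𝒬' ∩ ℛ. Then the two descriptions of the class 𝒲 coincide: an object W admits a short exact sequence 0 → R → Q → W → 0 with R ∈ ℛ', Q ∈ 𝒬' if and only if it admits a short exact sequence 0 → W → R'' → Q'' → 0 with R'' ∈ ℛ' and Q'' ∈ 𝒬'. -/

import Mathlib

/-!
STATEMENT 17: Let (𝒬, ℛ') and (𝒬', ℛ) be complete hereditary cotorsion pairs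
in an abelian category with 𝒬' ⊆ 𝒬, ℛ' ⊆ ℛ and 𝒬 ∩ ℛ' = 𝒬' ∩ ℛ.  Then the
two descriptions of Gillespie's trivial class coincide: an object W admits a
short exact sequence 0 → R → Q → W → 0 with R ∈ ℛ', Q ∈ 𝒬' if and only if it
admits a short exact sequence 0 → W → R'' → Q'' → 0 with R'' ∈ ℛ', Q'' ∈ 𝒬'.
-/

open CategoryTheory CategoryTheory.Limits CategoryTheory.Abelian

universe w v u

variable {C : Type u} [Category.{v} C] [Abelian C] [HasExt.{w} C]

/-- `(𝒜, ℬ)` is a cotorsion pair: each class is the `Ext¹`-orthogonal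
complement of the other. -/
def IsCotorsionPair (𝒜 ℬ : Set C) : Prop :=
  (∀ M : C, M ∈ 𝒜 ↔ ∀ B ∈ ℬ, Subsingleton (Ext M B 1)) ∧
    (∀ M : C, M ∈ ℬ ↔ ∀ A ∈ 𝒜, Subsingleton (Ext A M 1))

/-- A cotorsion pair `(𝒜, ℬ)` is complete: every object has a special
`𝒜`-precover and a special `ℬ`-preenvelope. -/
def IsCompleteCotorsionPair (𝒜 ℬ : Set C) : Prop :=
  (∀ M : C, ∃ (B A : C) (_ : B ∈ ℬ) (_ : A ∈ 𝒜) (f : B ⟶ A) (g : A ⟶ M)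
    (w : f ≫ g = 0), (ShortComplex.mk f g w).ShortExact) ∧
  (∀ M : C, ∃ (B A : C) (_ : B ∈ ℬ) (_ : A ∈ 𝒜) (f : M ⟶ B) (g : B ⟶ A)
    (w : f ≫ g = 0), (ShortComplex.mk f g w).ShortExact)

/-- A cotorsion pair `(𝒜, ℬ)` is hereditary: `Ext^i(𝒜, ℬ) = 0` for `i ≥ 1`. -/
def IsHereditary (𝒜 ℬ : Set C) : Prop :=
  ∀ A ∈ 𝒜, ∀ B ∈ ℬ, ∀ i : ℕ, 1 ≤ i → Subsingleton (Ext A B i)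



lemma ext_sub_contra_mid {S : ShortComplex C} (hS : S.ShortExact) (Y : C) (n : ℕ)
    (h1 : Subsingleton (Ext S.X₁ Y n)) (h3 : Subsingleton (Ext S.X₃ Y n)) :
    Subsingleton (Ext S.X₂ Y n) := by
  refine ⟨fun a b => ?_⟩
  suffices h : ∀ x : Ext S.X₂ Y n, x = 0 by rw [h a, h b]
  intro x
  obtain ⟨x₁, hx₁⟩ := Abelian.Ext.contravariant_sequence_exact₂ hS Y x (Subsingleton.elim _ 0)
  rw [← hx₁, Subsingleton.elim x₁ 0, Ext.comp_zero]

lemma ext_sub_cov_mid (X : C) {S : ShortComplex C} (hS : S.ShortExact) (n : ℕ)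
    (h1 : Subsingleton (Ext X S.X₁ n)) (h3 : Subsingleton (Ext X S.X₃ n)) :
    Subsingleton (Ext X S.X₂ n) := by
  refine ⟨fun a b => ?_⟩
  suffices h : ∀ x : Ext X S.X₂ n, x = 0 by rw [h a, h b]
  intro x
  obtain ⟨x₁, hx₁⟩ := Abelian.Ext.covariant_sequence_exact₂ X hS x (Subsingleton.elim _ 0)
  rw [← hx₁, Subsingleton.elim x₁ 0, Ext.zero_comp]

lemma ext_sub_cov_shift (X : C) {S : ShortComplex C} (hS : S.ShortExact)
    (h2 : Subsingleton (Ext X S.X₂ 1)) (h1 : Subsingleton (Ext X S.X₁ 2)) :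
    Subsingleton (Ext X S.X₃ 1) := by
  refine ⟨fun a b => ?_⟩
  suffices h : ∀ x : Ext X S.X₃ 1, x = 0 by rw [h a, h b]
  intro x
  obtain ⟨x₂, hx₂⟩ := Abelian.Ext.covariant_sequence_exact₃ X hS x rfl (Subsingleton.elim _ 0)
  rw [← hx₂, Subsingleton.elim x₂ 0, Ext.zero_comp]

lemma ext_sub_contra_shift {S : ShortComplex C} (hS : S.ShortExact) {Y : C}
    (h2 : Subsingleton (Ext S.X₂ Y 1)) (h3 : Subsingleton (Ext S.X₃ Y 2)) :
    Subsingleton (Ext S.X₁ Y 1) := by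
  refine ⟨fun a b => ?_⟩
  suffices h : ∀ x : Ext S.X₁ Y 1, x = 0 by rw [h a, h b]
  intro x
  obtain ⟨x₂, hx₂⟩ := Abelian.Ext.contravariant_sequence_exact₁ hS Y x rfl (Subsingleton.elim _ 0)
  rw [← hx₂, Subsingleton.elim x₂ 0, Ext.comp_zero]



lemma pullback_ses {W R'' Q'' R₀ Q₀ : C} {f : W ⟶ R''} {g : R'' ⟶ Q''} {w1 : f ≫ g = 0}
    (hS1 : (ShortComplex.mk f g w1).ShortExact)
    {i : R₀ ⟶ Q₀} {p : Q₀ ⟶ R''} {w2 : i ≫ p = 0}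
    (hS2 : (ShortComplex.mk i p w2).ShortExact) :
    ∃ (P : C) (a : R₀ ⟶ P) (b : P ⟶ W) (wb : a ≫ b = 0)
      (c : P ⟶ Q₀) (d : Q₀ ⟶ Q'') (wd : c ≫ d = 0),
      (ShortComplex.mk a b wb).ShortExact ∧ (ShortComplex.mk c d wd).ShortExact := by
  haveI : Mono f := hS1.mono_f
  haveI : Epi g := hS1.epi_g
  haveI : Mono i := hS2.mono_f
  haveI : Epi p := hS2.epi_g
  have wa : i ≫ p = (0 : R₀ ⟶ W) ≫ f := by rw [w2, zero_comp]
  refine ⟨pullback p f, pullback.lift i 0 wa, pullback.snd p f, pullback.lift_snd _ _ _,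
    pullback.fst p f, p ≫ g, ?_, ?_, ?_⟩
  · rw [pullback.condition_assoc, w1, comp_zero]
  · -- 0 → R₀ → P → W → 0
    haveI hma : Mono (pullback.lift i 0 wa) := by
      have : Mono (pullback.lift i 0 wa ≫ pullback.fst p f) := by
        rw [pullback.lift_fst]; infer_instance
      exact mono_of_mono _ (pullback.fst p f)
    refine ShortComplex.ShortExact.mk' ?_ hma inferInstance
    refine ShortComplex.exact_of_f_is_kernel _ (KernelFork.IsLimit.ofι' _ _ ?_)
    intro A k hk
    have hcond : (k ≫ pullback.fst p f) ≫ p = 0 := by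
      rw [Category.assoc, pullback.condition, ← Category.assoc, hk, zero_comp]
    refine ⟨hS2.exact.lift (k ≫ pullback.fst p f) hcond, ?_⟩
    apply pullback.hom_ext
    · rw [Category.assoc, pullback.lift_fst]
      exact hS2.exact.lift_f _ _
    · dsimp only [ShortComplex.mk] at hk ⊢
      rw [Category.assoc, pullback.lift_snd, comp_zero, hk]
  · -- 0 → P → Q₀ → Q'' → 0
    refine ShortComplex.ShortExact.mk' ?_ inferInstance inferInstance
    refine ShortComplex.exact_of_f_is_kernel _ (KernelFork.IsLimit.ofι' _ _ ?_)
    intro A k hk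
    have hcond : (k ≫ p) ≫ g = 0 := by rw [Category.assoc]; exact hk
    refine ⟨pullback.lift k (hS1.exact.lift (k ≫ p) hcond)
      (hS1.exact.lift_f _ _).symm, pullback.lift_fst _ _ _⟩

lemma pushout_ses {R Q W X₂ X₃ : C} {f : R ⟶ Q} {g : Q ⟶ W} {w1 : f ≫ g = 0}
    (hS1 : (ShortComplex.mk f g w1).ShortExact)
    {i : Q ⟶ X₂} {q : X₂ ⟶ X₃} {w2 : i ≫ q = 0}
    (hS2 : (ShortComplex.mk i q w2).ShortExact) :
    ∃ (P : C) (u : X₂ ⟶ P) (wu : (f ≫ i) ≫ u = 0)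
      (v : W ⟶ P) (b : P ⟶ X₃) (wv : v ≫ b = 0),
      (ShortComplex.mk (f ≫ i) u wu).ShortExact ∧ (ShortComplex.mk v b wv).ShortExact := by
  haveI : Mono f := hS1.mono_f
  haveI : Epi g := hS1.epi_g
  haveI : Mono i := hS2.mono_f
  haveI : Epi q := hS2.epi_g
  have wb : g ≫ (0 : W ⟶ X₃) = i ≫ q := by rw [w2, comp_zero]
  refine ⟨pushout g i, pushout.inr g i, ?_, pushout.inl g i, pushout.desc 0 q wb, pushout.inl_desc _ _ _, ?_, ?_⟩
  · rw [Category.assoc, ← pushout.condition, ← Category.assoc, w1, zero_comp]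
  · -- 0 → R → X₂ → P → 0
    refine ShortComplex.ShortExact.mk' ?_ inferInstance inferInstance
    refine ShortComplex.exact_of_g_is_cokernel _ (CokernelCofork.IsColimit.ofπ' _ _ ?_)
    intro A k hk
    have hcond : f ≫ i ≫ k = 0 := by rw [← Category.assoc]; exact hk
    refine ⟨pushout.desc (hS1.exact.desc (i ≫ k) hcond) k (hS1.exact.g_desc _ _),
      pushout.inr_desc _ _ _⟩
  · -- 0 → W → P → X₃ → 0
    haveI heb : Epi (pushout.desc (0 : W ⟶ X₃) q wb) := by
      have : Epi (pushout.inr g i ≫ pushout.desc (0 : W ⟶ X₃) q wb) := by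
        rw [pushout.inr_desc]; infer_instance
      exact epi_of_epi (pushout.inr g i) _
    refine ShortComplex.ShortExact.mk' ?_ inferInstance heb
    refine ShortComplex.exact_of_g_is_cokernel _ (CokernelCofork.IsColimit.ofπ' _ _ ?_)
    intro A k hk
    have hcond : i ≫ pushout.inr g i ≫ k = 0 := by
      rw [← Category.assoc, ← pushout.condition, Category.assoc, hk, comp_zero]
    refine ⟨hS2.exact.desc (pushout.inr g i ≫ k) hcond, ?_⟩
    apply pushout.hom_ext
    · dsimp only [ShortComplex.mk] at hk ⊢
      rw [← Category.assoc, pushout.inl_desc, zero_comp, hk]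
    · rw [← Category.assoc, pushout.inr_desc]
      exact hS2.exact.g_desc _ _

theorem stmt_17 (𝒬 ℛ' 𝒬' ℛ : Set C)
    (h₁ : IsCotorsionPair 𝒬 ℛ') (h₁c : IsCompleteCotorsionPair 𝒬 ℛ') (h₁h : IsHereditary 𝒬 ℛ')
    (h₂ : IsCotorsionPair 𝒬' ℛ) (h₂c : IsCompleteCotorsionPair 𝒬' ℛ) (h₂h : IsHereditary 𝒬' ℛ)
    (hQ : 𝒬' ⊆ 𝒬) (hR : ℛ' ⊆ ℛ) (hcore : 𝒬 ∩ ℛ' = 𝒬' ∩ ℛ) (W : C) :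
    (∃ (R Q : C) (_ : R ∈ ℛ') (_ : Q ∈ 𝒬') (f : R ⟶ Q) (g : Q ⟶ W)
      (w : f ≫ g = 0), (ShortComplex.mk f g w).ShortExact) ↔
    (∃ (R'' Q'' : C) (_ : R'' ∈ ℛ') (_ : Q'' ∈ 𝒬') (f : W ⟶ R'') (g : R'' ⟶ Q'')
      (w : f ≫ g = 0), (ShortComplex.mk f g w).ShortExact) := by
  constructor
  · rintro ⟨R, Q, hRmem, hQmem, f, g, w1, hS1⟩
    obtain ⟨Rh, Qh, hRhR, hQh, i, q, w2, hS2⟩ := h₂c.2 Q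
    have hRhQ' : Rh ∈ 𝒬' := (h₂.1 Rh).2 (fun X hX =>
      ext_sub_contra_mid hS2 X 1 ((h₂.1 Q).1 hQmem X hX) ((h₂.1 Qh).1 hQh X hX))
    have hRhmem : Rh ∈ 𝒬 ∩ ℛ' := by rw [hcore]; exact ⟨hRhQ', hRhR⟩
    obtain ⟨P, u, wu, v, b, wv, hB, hA⟩ := pushout_ses hS1 hS2
    have hP : P ∈ ℛ' := (h₁.2 P).2 (fun A hA' =>
      ext_sub_cov_shift A hB ((h₁.2 Rh).1 hRhmem.2 A hA') (h₁h A hA' R hRmem 2 (by norm_num)))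
    exact ⟨P, Qh, hP, hQh, v, b, wv, hA⟩
  · rintro ⟨R'', Q'', hRmem, hQmem, f, g, w1, hS1⟩
    obtain ⟨R₀, Q₀, hR₀, hQ₀Q, i, p, w2, hS2⟩ := h₁c.1 R''
    have hQ₀R' : Q₀ ∈ ℛ' := (h₁.2 Q₀).2 (fun A hA =>
      ext_sub_cov_mid A hS2 1 ((h₁.2 R₀).1 hR₀ A hA) ((h₁.2 R'').1 hRmem A hA))
    have hQ₀mem : Q₀ ∈ 𝒬' ∩ ℛ := by rw [← hcore]; exact ⟨hQ₀Q, hQ₀R'⟩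
    obtain ⟨P, a, b, wb, c, d, wd, hB, hA⟩ := pullback_ses hS1 hS2
    have hP : P ∈ 𝒬' := (h₂.1 P).2 (fun X hX =>
      ext_sub_contra_shift hA ((h₂.1 Q₀).1 hQ₀mem.1 X hX) (h₂h Q'' hQmem X hX 2 (by norm_num)))
    exact ⟨R₀, P, hR₀, hP, a, b, wb, hB⟩
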